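/- Let L be an invertible linear map of EuclideanSpace ℝ (Fin n) with singular values σ₁ ≥ σ₂ ≥ ⋯ ≥ σ_n > 0, i.e. the matrix of L in the standard basis factors as U · diag(σ₁,…,σ_n) · V with U and V orthogonal n×n matrices. Then for every 1 ≤ k ≤ n and all vectors v₁,…,v_k ∈ EuclideanSpace ℝ (Fin n): σ_{n−k+1} σ_{n−k+2} ⋯ σ_n · vol(v₁,…,v_k) ≤ vol(Lv₁,…,Lv_k) ≤ σ₁ σ₂ ⋯ σ_k · vol(v₁,…,v_k). -/

import Mathlib

open scoped RealInnerProductSpace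

/-- The `k`-dimensional volume of the parallelepiped spanned by the first `k`
vectors of the family `v`: the square root of the Gram determinant.
By convention the volume of the empty family is `1`. -/
noncomputable def gvol {E : Type*} [NormedAddCommGroup E] [InnerProductSpace ℝ E]
    (k : ℕ) (v : ℕ → E) : ℝ :=
  Real.sqrt (Matrix.det (Matrix.of fun i j : Fin k => ⟪v i, v j⟫))

namespace VolSV

open Matrix

variable {k n : ℕ}

lemma strictMono_le' {f : Fin k → Fin n} (hf : StrictMono f) :
    ∀ (m : ℕ) (hm : m < k), m ≤ (f ⟨m, hm⟩ : ℕ) := by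
  intro m
  induction m with
  | zero => intro _; exact Nat.zero_le _
  | succ m ih =>
    intro hm
    have h1 : m < k := Nat.lt_of_succ_lt hm
    have h2 := hf (show (⟨m, h1⟩ : Fin k) < ⟨m + 1, hm⟩ by simp [Fin.lt_def])
    rw [Fin.lt_def] at h2
    have h3 := ih h1
    omega

lemma le_of_strictMono {f : Fin k → Fin n} (hf : StrictMono f) (i : Fin k) :
    (i : ℕ) ≤ (f i : ℕ) := by
  simpa using strictMono_le' hf i i.2

lemma strictMono_upper {f : Fin k → Fin n} (hf : StrictMono f) (i : Fin k) :
    (f i : ℕ) ≤ n - k + i := by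
  have hkn : k ≤ n := by
    simpa using Fintype.card_le_of_injective f hf.injective
  have hg : StrictMono (fun j : Fin k => (f j.rev).rev) := by
    intro a b hab
    simp only []
    rw [Fin.rev_lt_rev]
    exact hf (by rwa [Fin.rev_lt_rev])
  have h := le_of_strictMono hg i.rev
  simp only [Fin.rev_rev, Fin.val_rev] at h
  have hfi := (f i).2
  have hi := i.2
  omega

lemma card_image_inj {f : Fin k → Fin n} (hf : Function.Injective f) :
    (Finset.image f Finset.univ).card = k := by
  rw [Finset.card_image_of_injective _ hf, Finset.card_univ, Fintype.card_fin]

noncomputable def gOf (f : Fin k → Fin n) : Fin k → Fin n :=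
  if h : Function.Injective f then (Finset.image f Finset.univ).orderEmbOfFin (card_image_inj h)
  else f

noncomputable def eOf (f : Fin k → Fin n) : Equiv.Perm (Fin k) :=
  if h : Function.Injective f then
    Equiv.ofBijective
      (fun x => ((Finset.image f Finset.univ).orderIsoOfFin (card_image_inj h)).symm
        ⟨f x, by simp [Finset.mem_image]⟩)
      (by
        rw [← Finite.injective_iff_bijective]
        intro a b hab
        have h2 := ((Finset.image f Finset.univ).orderIsoOfFin (card_image_inj h)).symm.injective hab
        exact h (Subtype.ext_iff.mp h2))
  else 1

lemma gOf_strictMono {f : Fin k → Fin n} (hf : Function.Injective f) : StrictMono (gOf f) := by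
  rw [gOf, dif_pos hf]
  exact ((Finset.image f Finset.univ).orderEmbOfFin (card_image_inj hf)).strictMono

lemma gOf_comp_eOf {f : Fin k → Fin n} (hf : Function.Injective f) (x : Fin k) :
    gOf f (eOf f x) = f x := by
  rw [gOf, eOf, dif_pos hf, dif_pos hf]
  simp only [Equiv.ofBijective_apply]
  rw [← Finset.coe_orderIsoOfFin_apply, OrderIso.apply_symm_apply]

lemma gOf_comp {g : Fin k → Fin n} (hg : StrictMono g) (e : Equiv.Perm (Fin k)) :
    gOf (g ∘ e) = g := by
  have h1 : Function.Injective (g ∘ e) := hg.injective.comp e.injective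
  rw [gOf, dif_pos h1]
  refine (Finset.orderEmbOfFin_unique (card_image_inj h1) (fun x => ?_) hg).symm
  simp only [Finset.mem_image, Finset.mem_univ, true_and]
  exact ⟨e.symm x, by simp⟩

lemma eOf_comp {g : Fin k → Fin n} (hg : StrictMono g) (e : Equiv.Perm (Fin k)) :
    eOf (g ∘ e) = e := by
  have h1 : Function.Injective (g ∘ e) := hg.injective.comp e.injective
  apply Equiv.ext
  intro x
  have h2 := gOf_comp_eOf h1 x
  rw [gOf_comp hg e] at h2
  exact hg.injective h2

lemma det_mul_diag_mul_transpose (W : Matrix (Fin k) (Fin n) ℝ) (d : Fin n → ℝ) :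
    (W * Matrix.diagonal d * Wᵀ).det =
      ∑ g ∈ Finset.univ.filter (fun g : Fin k → Fin n => StrictMono g),
        (∏ i, d (g i)) * (W.submatrix id g).det ^ 2 := by
  set t : (Fin k → Fin n) → ℝ :=
    fun f => (∏ i, d (f i)) * ((∏ i, W i (f i)) * (W.submatrix id f).det) with ht
  have hstep : (W * Matrix.diagonal d * Wᵀ).det = ∑ f : Fin k → Fin n, t f := by
    have hN : ∀ a b, (W * Matrix.diagonal d * Wᵀ) a b = ∑ m, W a m * d m * W b m := by
      intro a b
      rw [Matrix.mul_apply]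
      simp [Matrix.mul_diagonal, Matrix.transpose_apply]
    rw [Matrix.det_apply']
    simp only [hN]
    have h1 : ∀ σ : Equiv.Perm (Fin k),
        (Equiv.Perm.sign σ : ℝ) * ∏ i, ∑ m, W (σ i) m * d m * W i m
          = ∑ f : Fin k → Fin n, (Equiv.Perm.sign σ : ℝ) *
              ∏ i, W (σ i) (f i) * d (f i) * W i (f i) := by
      intro σ
      rw [Finset.prod_univ_sum, Finset.mul_sum, Fintype.piFinset_univ]
    simp only [h1]
    rw [Finset.sum_comm]
    refine Finset.sum_congr rfl fun f _ => ?_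
    rw [ht]
    simp only [Finset.prod_mul_distrib]
    rw [Matrix.det_apply', Finset.mul_sum, Finset.mul_sum]
    refine Finset.sum_congr rfl fun σ _ => ?_
    simp only [Matrix.submatrix_apply, id_eq]
    ring
  have hinj : (∑ f : Fin k → Fin n, t f)
      = ∑ f ∈ Finset.univ.filter (fun f : Fin k → Fin n => Function.Injective f), t f := by
    refine (Finset.sum_filter_of_ne fun f _ hf => ?_).symm
    by_contra hni
    obtain ⟨a, b, hab, hne⟩ := Function.not_injective_iff.mp hni
    apply hf
    have hdet0 : (W.submatrix id f).det = 0 :=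
      Matrix.det_zero_of_column_eq hne (fun x => by simp [Matrix.submatrix_apply, hab])
    rw [ht]
    simp [hdet0]
  have hbij : (∑ f ∈ Finset.univ.filter (fun f : Fin k → Fin n => Function.Injective f), t f)
      = ∑ p ∈ (Finset.univ.filter (fun g : Fin k → Fin n => StrictMono g)) ×ˢ
          (Finset.univ : Finset (Equiv.Perm (Fin k))), t (p.1 ∘ p.2) := by
    refine Finset.sum_bij' (fun f _ => (gOf f, eOf f)) (fun p _ => p.1 ∘ ⇑p.2)
      ?_ ?_ ?_ ?_ ?_
    · intro f hf
      rw [Finset.mem_filter] at hf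
      rw [Finset.mem_product, Finset.mem_filter]
      exact ⟨⟨Finset.mem_univ _, gOf_strictMono hf.2⟩, Finset.mem_univ _⟩
    · intro p hp
      rw [Finset.mem_product, Finset.mem_filter] at hp
      rw [Finset.mem_filter]
      exact ⟨Finset.mem_univ _, hp.1.2.injective.comp p.2.injective⟩
    · intro f hf
      rw [Finset.mem_filter] at hf
      exact funext (gOf_comp_eOf hf.2)
    · intro p hp
      rw [Finset.mem_product, Finset.mem_filter] at hp
      exact Prod.ext (gOf_comp hp.1.2 p.2) (eOf_comp hp.1.2 p.2)
    · intro f hf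
      rw [Finset.mem_filter] at hf
      show t f = t (gOf f ∘ ⇑(eOf f))
      exact congrArg t (funext fun x => (gOf_comp_eOf hf.2 x).symm)
  rw [hstep, hinj, hbij, Finset.sum_product]
  refine Finset.sum_congr rfl fun g hg => ?_
  rw [Finset.mem_filter] at hg
  have hgm := hg.2
  have hterm : ∀ e : Equiv.Perm (Fin k),
      t (g ∘ e) = (∏ i, d (g i)) * (W.submatrix id g).det *
        ((Equiv.Perm.sign e : ℝ) * ∏ j, W (e.symm j) (g j)) := by
    intro e
    rw [ht]
    simp only [Function.comp_apply]
    have hd : (∏ i, d (g (e i))) = ∏ i, d (g i) := Equiv.prod_comp e (fun i => d (g i))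
    have hdet : (W.submatrix id (g ∘ ⇑e)).det
        = (Equiv.Perm.sign e : ℝ) * (W.submatrix id g).det := by
      have : W.submatrix id (g ∘ ⇑e) = (W.submatrix id g).submatrix id ⇑e := by
        rw [Matrix.submatrix_submatrix]
        rfl
      rw [this, Matrix.det_permute']
    have hW : (∏ i, W i (g (e i))) = ∏ j, W (e.symm j) (g j) := by
      have := Equiv.prod_comp e (fun j => W (e.symm j) (g j))
      simpa using this
    rw [hd, hdet, hW]
    ring
  simp only [hterm]
  rw [← Finset.mul_sum]
  have hsum : (∑ e : Equiv.Perm (Fin k), (Equiv.Perm.sign e : ℝ) * ∏ j, W (e.symm j) (g j))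
      = (W.submatrix id g).det := by
    rw [Matrix.det_apply']
    refine Fintype.sum_equiv (Equiv.inv (Equiv.Perm (Fin k))) _ _ fun e => ?_
    simp [Matrix.submatrix_apply, Equiv.Perm.inv_def]
  rw [hsum]
  ring

lemma inner_eq_dot (x y : EuclideanSpace ℝ (Fin n)) :
    ⟪x, y⟫ = (WithLp.equiv 2 (Fin n → ℝ) x) ⬝ᵥ (WithLp.equiv 2 (Fin n → ℝ) y) := by
  simp [PiLp.inner_apply, RCLike.inner_apply, dotProduct, mul_comm]

lemma inner_toEuclideanLin (M : Matrix (Fin n) (Fin n) ℝ) (x y : EuclideanSpace ℝ (Fin n)) :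
    ⟪Matrix.toEuclideanLin M x, Matrix.toEuclideanLin M y⟫ =
      (WithLp.equiv 2 (Fin n → ℝ) x) ⬝ᵥ ((Mᵀ * M) *ᵥ (WithLp.equiv 2 (Fin n → ℝ) y)) := by
  rw [inner_eq_dot]
  simp only [WithLp.equiv_apply, Matrix.ofLp_toEuclideanLin_apply]
  rw [← Matrix.vecMul_transpose, ← Matrix.dotProduct_mulVec, Matrix.mulVec_mulVec]

end VolSV

open Matrix in
/-- **Volume distortion in terms of singular values** (equation (27) of the paper).
Let `L` be an invertible linear map of `EuclideanSpace ℝ (Fin n)` whose matrix factors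
as `U · diag(σ₁,…,σ_n) · V` with `U, V` orthogonal and `σ₁ ≥ σ₂ ≥ ⋯ ≥ σ_n > 0`
(here `σ i` is the `(i+1)`-st singular value, so `σ 0 = σ₁`).  Then for all `1 ≤ k ≤ n`
and all vectors `v₁, …, v_k`:
`σ_{n-k+1} ⋯ σ_n · vol(v₁,…,v_k) ≤ vol(Lv₁,…,Lv_k) ≤ σ₁ ⋯ σ_k · vol(v₁,…,v_k)`. -/
theorem vol_map_le_of_singular_values
    (n : ℕ) (L : EuclideanSpace ℝ (Fin n) →ₗ[ℝ] EuclideanSpace ℝ (Fin n))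
    (hL : Function.Bijective L)
    (σ : ℕ → ℝ)
    (hσpos : ∀ i < n, 0 < σ i)
    (hσmono : ∀ i j, i ≤ j → j < n → σ j ≤ σ i)
    (U V : Matrix (Fin n) (Fin n) ℝ)
    (hU : U ∈ Matrix.orthogonalGroup (Fin n) ℝ)
    (hV : V ∈ Matrix.orthogonalGroup (Fin n) ℝ)
    (hfac : Matrix.toEuclideanLin (U * Matrix.diagonal (fun i : Fin n => σ i) * V) = L)
    (k : ℕ) (hk1 : 1 ≤ k) (hkn : k ≤ n) (v : ℕ → EuclideanSpace ℝ (Fin n)) :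
    (∏ i ∈ Finset.Ico (n - k) n, σ i) * gvol k v ≤ gvol k (fun i => L (v i)) ∧
      gvol k (fun i => L (v i)) ≤ (∏ i ∈ Finset.range k, σ i) * gvol k v := by
  classical
  set d : Fin n → ℝ := fun m => σ (m : ℕ) ^ 2 with hd
  set W : Matrix (Fin k) (Fin n) ℝ :=
    Matrix.of (fun (i : Fin k) (m : Fin n) =>
      (V *ᵥ (WithLp.equiv 2 (Fin n → ℝ) (v (i : ℕ)))) m) with hWdef
  have hUU : Uᵀ * U = 1 := by
    have := (Matrix.mem_orthogonalGroup_iff' (Fin n) ℝ).mp hU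
    simpa [Matrix.star_eq_conjTranspose,
      Matrix.conjTranspose_eq_transpose_of_trivial] using this
  have hVV : Vᵀ * V = 1 := by
    have := (Matrix.mem_orthogonalGroup_iff' (Fin n) ℝ).mp hV
    simpa [Matrix.star_eq_conjTranspose,
      Matrix.conjTranspose_eq_transpose_of_trivial] using this
  set M : Matrix (Fin n) (Fin n) ℝ := U * Matrix.diagonal (fun i : Fin n => σ i) * V with hM
  have hMtM : Mᵀ * M = Vᵀ * Matrix.diagonal d * V := by
    rw [hM]
    simp only [Matrix.transpose_mul, Matrix.diagonal_transpose, Matrix.mul_assoc]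
    rw [← Matrix.mul_assoc Uᵀ U, hUU, Matrix.one_mul,
      ← Matrix.mul_assoc (Matrix.diagonal _) (Matrix.diagonal _), Matrix.diagonal_mul_diagonal]
    congr 2
    funext m
    rw [hd]
    ring
  -- Gram matrix of the images
  have hG1 : (Matrix.of fun i j : Fin k => (⟪L (v (i : ℕ)), L (v (j : ℕ))⟫ : ℝ))
      = W * Matrix.diagonal d * Wᵀ := by
    ext a b
    rw [← hfac]
    simp only [Matrix.of_apply]
    rw [VolSV.inner_toEuclideanLin, hMtM]
    have h2 : (W * Matrix.diagonal d * Wᵀ) a b = ∑ m, W a m * d m * W b m := by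
      rw [Matrix.mul_apply]
      simp [Matrix.mul_diagonal, Matrix.transpose_apply]
    rw [h2]
    rw [show Vᵀ * Matrix.diagonal d * V = Vᵀ * (Matrix.diagonal d * V) from Matrix.mul_assoc _ _ _]
    rw [← Matrix.mulVec_mulVec, Matrix.dotProduct_mulVec, Matrix.vecMul_transpose,
      ← Matrix.mulVec_mulVec]
    simp only [dotProduct, Matrix.mulVec_diagonal, hWdef, Matrix.of_apply]
    refine Finset.sum_congr rfl fun m _ => ?_
    ring
  have hG2 : (Matrix.of fun i j : Fin k => (⟪v (i : ℕ), v (j : ℕ)⟫ : ℝ)) = W * Wᵀ := by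
    ext a b
    simp only [Matrix.of_apply]
    rw [VolSV.inner_eq_dot]
    have h2 : (W * Wᵀ) a b = ∑ m, W a m * W b m := by
      rw [Matrix.mul_apply]
      simp [Matrix.transpose_apply]
    rw [h2]
    have h3 : (WithLp.equiv 2 (Fin n → ℝ) (v (a : ℕ)))
        ⬝ᵥ (WithLp.equiv 2 (Fin n → ℝ) (v (b : ℕ)))
        = (WithLp.equiv 2 (Fin n → ℝ) (v (a : ℕ)))
          ⬝ᵥ ((Vᵀ * V) *ᵥ (WithLp.equiv 2 (Fin n → ℝ) (v (b : ℕ)))) := by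
      rw [hVV]
      simp [Matrix.one_mulVec]
    rw [h3, ← Matrix.mulVec_mulVec, Matrix.dotProduct_mulVec, Matrix.vecMul_transpose]
    simp only [dotProduct, hWdef, Matrix.of_apply]
  -- rewrite gvol in terms of W
  have hgvL : gvol k (fun i => L (v i)) = Real.sqrt ((W * Matrix.diagonal d * Wᵀ).det) := by
    rw [gvol, ← hG1]
  have hgv : gvol k v = Real.sqrt ((W * Wᵀ).det) := by
    rw [gvol, ← hG2]
  -- the two determinant expansions
  have hexp := VolSV.det_mul_diag_mul_transpose W d
  have hexp1 : (W * Wᵀ).det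
      = ∑ g ∈ Finset.univ.filter (fun g : Fin k → Fin n => StrictMono g),
          (W.submatrix id g).det ^ 2 := by
    have := VolSV.det_mul_diag_mul_transpose W (fun _ => 1)
    simpa using this
  have hWWnn : 0 ≤ (W * Wᵀ).det := by
    rw [hexp1]
    exact Finset.sum_nonneg fun g _ => sq_nonneg _
  set c : ℝ := ∏ i ∈ Finset.range k, σ i with hc
  set b : ℝ := ∏ i ∈ Finset.Ico (n - k) n, σ i with hb
  have hc0 : 0 ≤ c := Finset.prod_nonneg fun i hi =>
    (hσpos i (lt_of_lt_of_le (Finset.mem_range.mp hi) hkn)).le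
  have hb0 : 0 ≤ b := Finset.prod_nonneg fun i hi =>
    (hσpos i (Finset.mem_Ico.mp hi).2).le
  have hcfin : c = ∏ i : Fin k, σ (i : ℕ) := by
    rw [hc, ← Fin.prod_univ_eq_prod_range]
  have hbfin : b = ∏ i : Fin k, σ (n - k + (i : ℕ)) := by
    rw [hb, Finset.prod_Ico_eq_prod_range, show n - (n - k) = k by omega,
      ← Fin.prod_univ_eq_prod_range]
  -- pointwise bounds for strictly monotone g
  have hupper : (W * Matrix.diagonal d * Wᵀ).det ≤ c ^ 2 * (W * Wᵀ).det := by
    rw [hexp, hexp1, Finset.mul_sum]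
    refine Finset.sum_le_sum fun g hg => ?_
    have hgm : StrictMono g := (Finset.mem_filter.mp hg).2
    refine mul_le_mul_of_nonneg_right ?_ (sq_nonneg _)
    have h1 : (∏ i : Fin k, d (g i)) = (∏ i : Fin k, σ ((g i : ℕ))) ^ 2 := by
      rw [← Finset.prod_pow]
    rw [h1, hcfin]
    refine pow_le_pow_left₀ (Finset.prod_nonneg fun i _ => (hσpos _ (g i).2).le) ?_ 2
    refine Finset.prod_le_prod (fun i _ => (hσpos _ (g i).2).le) fun i _ => ?_
    exact hσmono (i : ℕ) ((g i : ℕ)) (VolSV.le_of_strictMono hgm i) (g i).2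
  have hlower : b ^ 2 * (W * Wᵀ).det ≤ (W * Matrix.diagonal d * Wᵀ).det := by
    rw [hexp, hexp1, Finset.mul_sum]
    refine Finset.sum_le_sum fun g hg => ?_
    have hgm : StrictMono g := (Finset.mem_filter.mp hg).2
    refine mul_le_mul_of_nonneg_right ?_ (sq_nonneg _)
    have h1 : (∏ i : Fin k, d (g i)) = (∏ i : Fin k, σ ((g i : ℕ))) ^ 2 := by
      rw [← Finset.prod_pow]
    rw [h1, hbfin]
    refine pow_le_pow_left₀ (Finset.prod_nonneg fun (i : Fin k) _ => (hσpos _ (by have := i.2; omega : n - k + (i : ℕ) < n)).le) ?_ 2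
    refine Finset.prod_le_prod (fun (i : Fin k) _ => (hσpos _ (by have := i.2; omega : n - k + (i : ℕ) < n)).le) fun i _ => ?_
    exact hσmono ((g i : ℕ)) (n - k + (i : ℕ)) (VolSV.strictMono_upper hgm i) (by have := i.2; omega)
  constructor
  · rw [hgvL, hgv]
    have h1 : b * Real.sqrt ((W * Wᵀ).det) = Real.sqrt (b ^ 2 * (W * Wᵀ).det) := by
      rw [Real.sqrt_mul (sq_nonneg b), Real.sqrt_sq hb0]
    rw [h1]
    exact Real.sqrt_le_sqrt hlower
  · rw [hgvL, hgv]
    have h1 : c * Real.sqrt ((W * Wᵀ).det) = Real.sqrt (c ^ 2 * (W * Wᵀ).det) := by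
      rw [Real.sqrt_mul (sq_nonneg c), Real.sqrt_sq hc0]
    rw [h1]
    exact Real.sqrt_le_sqrt hupper
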